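/- For b ≠ 0, the curve σ(t) = (u cos(bt) + (a/b) sin(bt), bt + v) satisfies the geodesic equations of M(0): (σ¹)'' + x¹·((σ²)')² = 0 and (σ²)'' = 0, with σ(0) = (u,v) and σ'(0) = (a,b); for b = 0, σ(t) = (at+u, v) is a geodesic. Hence every geodesic of M(0) is defined for all t ∈ ℝ, so M(0) is geodesically complete. -/

import Mathlib

/-- The geodesic equations of `M(0)` (only nonzero Christoffel symbol
`Γ₂₂¹ = x¹`) for a curve `σ : ℝ → ℝ²`:
`(σ¹)'' + σ¹·((σ²)')² = 0` and `(σ²)'' = 0`. -/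
def IsGeodesicM0 (σ : ℝ → ℝ × ℝ) : Prop :=
  ∀ t : ℝ,
    deriv (deriv fun s => (σ s).1) t
        + (σ t).1 * (deriv (fun s => (σ s).2) t) ^ 2 = 0 ∧
    deriv (deriv fun s => (σ s).2) t = 0

private lemma hbt (b t : ℝ) : HasDerivAt (fun s : ℝ => b * s) b t := by
  simpa using (hasDerivAt_id t).const_mul b

private lemma trig_deriv (u c b t : ℝ) :
    HasDerivAt (fun s : ℝ => u * Real.cos (b * s) + c * Real.sin (b * s))
      (u * (-Real.sin (b * t) * b) + c * (Real.cos (b * t) * b)) t := by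
  have hc := (Real.hasDerivAt_cos (b * t)).comp t (hbt b t)
  have hs := (Real.hasDerivAt_sin (b * t)).comp t (hbt b t)
  exact (hc.const_mul u).add (hs.const_mul c)

private lemma trig_deriv_eq (u c b : ℝ) :
    (deriv fun s : ℝ => u * Real.cos (b * s) + c * Real.sin (b * s)) =
      fun t => (-(u * b)) * Real.sin (b * t) + (c * b) * Real.cos (b * t) := by
  funext t
  have := (trig_deriv u c b t).deriv
  rw [this]; ring

private lemma lin_deriv (b v t : ℝ) : HasDerivAt (fun s : ℝ => b * s + v) b t := by
  simpa using (hbt b t).add_const v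

private lemma lin_deriv_eq (b v : ℝ) :
    (deriv fun s : ℝ => b * s + v) = fun _ => b := by
  funext t; exact (lin_deriv b v t).deriv

theorem M0_geodesics_and_complete :
    (∀ u v a b : ℝ, b ≠ 0 →
      IsGeodesicM0 (fun t => (u * Real.cos (b * t) + (a / b) * Real.sin (b * t),
          b * t + v)) ∧
      (fun t : ℝ => (u * Real.cos (b * t) + (a / b) * Real.sin (b * t),
          b * t + v)) 0 = (u, v) ∧
      deriv (fun t : ℝ => (u * Real.cos (b * t) + (a / b) * Real.sin (b * t),
          b * t + v)) 0 = (a, b)) ∧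
    (∀ u v a : ℝ,
      IsGeodesicM0 (fun t => (a * t + u, v)) ∧
      (fun t : ℝ => (a * t + u, v)) 0 = (u, v) ∧
      deriv (fun t : ℝ => (a * t + u, v)) 0 = (a, 0)) ∧
    (∀ u v a b : ℝ, ∃ σ : ℝ → ℝ × ℝ,
      IsGeodesicM0 σ ∧ σ 0 = (u, v) ∧ deriv σ 0 = (a, b)) := by
  have main1 : ∀ u v a b : ℝ, b ≠ 0 →
      IsGeodesicM0 (fun t => (u * Real.cos (b * t) + (a / b) * Real.sin (b * t),
          b * t + v)) ∧
      (fun t : ℝ => (u * Real.cos (b * t) + (a / b) * Real.sin (b * t),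
          b * t + v)) 0 = (u, v) ∧
      deriv (fun t : ℝ => (u * Real.cos (b * t) + (a / b) * Real.sin (b * t),
          b * t + v)) 0 = (a, b) := by
    intro u v a b hb
    refine ⟨?_, ?_, ?_⟩
    · intro t
      constructor
      · simp only
        rw [trig_deriv_eq u (a / b) b]
        have h2 : (deriv fun s : ℝ =>
            (-(u * b)) * Real.sin (b * s) + (a / b * b) * Real.cos (b * s)) t =
            (a / b * b) * (-Real.sin (b * t) * b) + (-(u * b)) * (Real.cos (b * t) * b) := by
          have := (trig_deriv (a / b * b) (-(u * b)) b t).deriv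
          rw [← this]; congr 1; funext s; ring
        rw [h2, lin_deriv_eq b v]
        ring
      · rw [lin_deriv_eq b v]; simp
    · simp
    · have h1 : HasDerivAt (fun t : ℝ =>
          (u * Real.cos (b * t) + (a / b) * Real.sin (b * t), b * t + v))
          (u * (-Real.sin (b * 0) * b) + (a / b) * (Real.cos (b * 0) * b), b) 0 :=
        HasDerivAt.prodMk (trig_deriv u (a / b) b 0) (lin_deriv b v 0)
      rw [h1.deriv]
      simp [mul_div_assoc, mul_div_cancel_left₀, hb, mul_comm a b]
  have main2 : ∀ u v a : ℝ,
      IsGeodesicM0 (fun t => (a * t + u, v)) ∧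
      (fun t : ℝ => (a * t + u, v)) 0 = (u, v) ∧
      deriv (fun t : ℝ => (a * t + u, v)) 0 = (a, 0) := by
    intro u v a
    refine ⟨?_, by simp, ?_⟩
    · intro t
      constructor
      · simp only
        rw [lin_deriv_eq a u]
        simp
      · simp only
        have : (deriv fun _ : ℝ => v) = fun _ : ℝ => (0:ℝ) := by
          funext s; simp
        rw [this]; simp
    · have h1 : HasDerivAt (fun t : ℝ => (a * t + u, v)) (a, 0) 0 :=
        HasDerivAt.prodMk (lin_deriv a u 0) (hasDerivAt_const 0 v)
      exact h1.deriv
  refine ⟨main1, main2, ?_⟩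
  intro u v a b
  by_cases hb : b = 0
  · subst hb
    exact ⟨fun t => (a * t + u, v), main2 u v a⟩
  · exact ⟨_, main1 u v a b hb⟩
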